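/- arXiv:math/0703678 — 3 statements merged into one kernel-verified Lean document; each statement's English description precedes it below -/
import Mathlib

section
/- Let A be a noetherian ring with ideals I and J such that I = fA is principal and f is a nonzerodivisor (or just any element), and suppose n is such that for all m ≥ 0, J^(n+m) ∩ I = J^m · (J^n ∩ I). Then for the ideal J_n := I + J^n and every k > 0 one has J_n^k ∩ I = f · J_n^(k-1), i.e. any element of J_n^k divisible by f (lying in I) is f times an element of J_n^(k-1). -/
/-- If `J^(n+m) ∩ (f) = J^m (J^n ∩ (f))` for all `m ≥ 0`, then for
`Jₙ := (f) + J^n` and every `k > 0` one has `Jₙ^k ∩ (f) = f · Jₙ^(k-1)`. -/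
theorem stmt0 {A : Type*} [CommRing A] [IsNoetherianRing A] (f : A) (J : Ideal A) (n : ℕ)
    (h : ∀ m : ℕ, J ^ (n + m) ⊓ Ideal.span {f} = J ^ m * (J ^ n ⊓ Ideal.span {f})) :
    ∀ k : ℕ, 0 < k →
      (Ideal.span {f} + J ^ n) ^ k ⊓ Ideal.span {f} =
        Ideal.span {f} * (Ideal.span {f} + J ^ n) ^ (k - 1) := by
  intro k hk
  obtain ⟨k, rfl⟩ := Nat.exists_eq_succ_of_ne_zero hk.ne'
  set I := Ideal.span {f} with hI
  set Jn := I + J ^ n with hJn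
  have hJnle : J ^ n ≤ Jn := le_sup_right
  have hIle : I ≤ Jn := le_sup_left
  have hpow : ∀ m : ℕ, (J ^ n) ^ m ≤ Jn ^ m := fun m => Ideal.pow_right_mono hJnle m
  have key : ∀ k : ℕ, Jn ^ (k + 1) ≤ I * Jn ^ k ⊔ J ^ (n * (k + 1)) := by
    intro k
    induction k with
    | zero => simp [hJn, Ideal.add_eq_sup]
    | succ k ih =>
      have : Jn ^ (k + 2) = Jn * Jn ^ (k + 1) := by ring
      rw [this]
      calc Jn * Jn ^ (k + 1) ≤ Jn * (I * Jn ^ k ⊔ J ^ (n * (k + 1))) :=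
            Ideal.mul_mono_right ih
        _ = Jn * (I * Jn ^ k) ⊔ Jn * J ^ (n * (k + 1)) := Ideal.mul_sup _ _ _
        _ = I * Jn ^ (k + 1) ⊔ (I * J ^ (n * (k + 1)) ⊔ J ^ n * J ^ (n * (k + 1))) := by
            rw [show Jn * (I * Jn ^ k) = I * Jn ^ (k + 1) by ring,
              hJn, Ideal.add_eq_sup, Ideal.sup_mul]
        _ ≤ I * Jn ^ (k + 1) ⊔ J ^ (n * (k + 2)) := by
            apply sup_le le_sup_left (sup_le _ _)
            · refine le_trans (Ideal.mul_mono_right ?_) le_sup_left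
              calc J ^ (n * (k + 1)) = (J ^ n) ^ (k + 1) := by rw [← pow_mul]
                _ ≤ Jn ^ (k + 1) := hpow _
            · refine le_trans (le_of_eq ?_) le_sup_right
              rw [← pow_add]; ring_nf
  simp only [Nat.succ_sub_one]
  apply le_antisymm
  · calc Jn ^ (k + 1) ⊓ I ≤ (I * Jn ^ k ⊔ J ^ (n * (k + 1))) ⊓ I :=
        inf_le_inf_right _ (key k)
      _ = I * Jn ^ k ⊔ J ^ (n * (k + 1)) ⊓ I :=
        sup_inf_assoc_of_le _ Ideal.mul_le_left
      _ ≤ I * Jn ^ k := by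
        apply sup_le le_rfl
        have : J ^ (n * (k + 1)) ⊓ I = J ^ (n * k) * (J ^ n ⊓ I) := by
          rw [show n * (k + 1) = n + n * k by ring]; exact h (n * k)
        rw [this]
        calc J ^ (n * k) * (J ^ n ⊓ I) ≤ J ^ (n * k) * I :=
              Ideal.mul_mono_right inf_le_right
          _ = I * J ^ (n * k) := mul_comm _ _
          _ ≤ I * Jn ^ k := Ideal.mul_mono_right (by rw [pow_mul]; exact hpow k)
  · have h1 : I * Jn ^ k ≤ Jn ^ (k + 1) := by
      calc I * Jn ^ k ≤ Jn * Jn ^ k := Ideal.mul_mono_left hIle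
        _ = Jn ^ (k + 1) := by ring
    exact le_inf h1 Ideal.mul_le_left
end

section
/- Let A be a noetherian ring, I = (f_1, …, f_n) an ideal, and g ∈ I. Then the subring A[I/g] of the localization A_g generated by the elements f_i/g is isomorphic to the quotient of A' = A[T_1, …, T_n]/(gT_1 − f_1, …, gT_n − f_n) by its g-torsion submodule. -/
/-- The `g`-torsion ideal of a commutative ring. -/
def gTorsion {A' : Type*} [CommRing A'] (g : A') : Ideal A' where
  carrier := {x | ∃ k : ℕ, g ^ k * x = 0}
  zero_mem' := ⟨0, by simp⟩
  add_mem' := by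
    rintro a b ⟨k, hk⟩ ⟨l, hl⟩
    refine ⟨k + l, ?_⟩
    have h1 : g ^ (k + l) * (a + b) = g ^ l * (g ^ k * a) + g ^ k * (g ^ l * b) := by ring
    rw [h1, hk, hl, mul_zero, mul_zero, add_zero]
  smul_mem' := by
    rintro c x ⟨k, hk⟩
    refine ⟨k, ?_⟩
    have h1 : g ^ k * (c • x) = c * (g ^ k * x) := by
      rw [smul_eq_mul]; ring
    rw [h1, hk, mul_zero]

open MvPolynomial

section

variable {A : Type*} [CommRing A] (n : ℕ) (f : Fin n → A) (g : A)

/-- Key lemma: modulo the relations, `g^d * p ≡ C a` with compatible evaluation. -/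
lemma key_lemma (p : MvPolynomial (Fin n) A) :
    ∃ (d : ℕ) (a : A),
      C g ^ d * p - C a ∈ Ideal.span (Set.range fun i => C g * X i - C (f i)) ∧
      algebraMap A (Localization.Away g) a =
        aeval (fun i => algebraMap A (Localization.Away g) (f i) * IsLocalization.Away.invSelf g) p
          * algebraMap A (Localization.Away g) g ^ d := by
  set J := Ideal.span (Set.range fun i => C g * X i - C (f i)) with hJ
  set φ := aeval (R := A) (fun i => algebraMap A (Localization.Away g) (f i) * IsLocalization.Away.invSelf g)
  induction p using MvPolynomial.induction_on with
  | C c => exact ⟨0, c, by simp, by simp [φ]⟩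
  | add p q hp hq =>
    obtain ⟨d, a, hmem, heq⟩ := hp
    obtain ⟨e, b, hmem', heq'⟩ := hq
    refine ⟨d + e, g ^ e * a + g ^ d * b, ?_, ?_⟩
    · have : C g ^ (d + e) * (p + q) - C (g ^ e * a + g ^ d * b) =
        C g ^ e * (C g ^ d * p - C a) + C g ^ d * (C g ^ e * q - C b) := by
        push_cast [map_mul, map_pow, map_add]
        ring
      rw [this]
      exact add_mem (Ideal.mul_mem_left _ _ hmem) (Ideal.mul_mem_left _ _ hmem')
    · push_cast [map_add, map_mul, map_pow, heq, heq']
      ring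
  | mul_X p i hp =>
    obtain ⟨d, a, hmem, heq⟩ := hp
    refine ⟨d + 1, a * f i, ?_, ?_⟩
    · have : C g ^ (d + 1) * (p * X i) - C (a * f i) =
        (C g ^ d * p - C a) * (C g * X i) + C a * (C g * X i - C (f i)) := by
        push_cast [map_mul]
        ring
      rw [this]
      refine add_mem (Ideal.mul_mem_right _ _ hmem) (Ideal.mul_mem_left _ _ ?_)
      exact Ideal.subset_span ⟨i, rfl⟩
    · have hunit : algebraMap A (Localization.Away g) g * IsLocalization.Away.invSelf g = 1 :=
        IsLocalization.Away.mul_invSelf g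
      rw [map_mul, heq, map_mul, aeval_X]
      linear_combination (-(φ p * (algebraMap A (Localization.Away g)) (f i) *
        (algebraMap A (Localization.Away g)) g ^ d)) * hunit

end

/-- the chart `A[I/g]` of the blow-up of `Spec A` along `I = (f₁,…,fₙ)`,
i.e. the subring of `A_g` generated by the `fᵢ/g`, is isomorphic to
`A[T₁,…,Tₙ]/(gT₁ − f₁, …, gTₙ − fₙ)` modulo its `g`-torsion. -/
theorem stmt3 {A : Type*} [CommRing A] [IsNoetherianRing A]
    (n : ℕ) (f : Fin n → A) (g : A) (hg : g ∈ Ideal.span (Set.range f)) :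
    Nonempty
      (((MvPolynomial (Fin n) A ⧸
          Ideal.span (Set.range fun i =>
            MvPolynomial.C g * MvPolynomial.X i - MvPolynomial.C (f i))) ⧸
        gTorsion ((Ideal.Quotient.mk (Ideal.span (Set.range fun i =>
            MvPolynomial.C g * MvPolynomial.X i - MvPolynomial.C (f i))))
          (MvPolynomial.C g)))
      ≃ₐ[A]
      Algebra.adjoin A (Set.range fun i =>
        algebraMap A (Localization.Away g) (f i) * IsLocalization.Away.invSelf g)) := by
  classical
  set J := Ideal.span (Set.range fun i => C g * X i - C (f i)) with hJdef
  set v : Fin n → Localization.Away g :=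
    fun i => algebraMap A (Localization.Away g) (f i) * IsLocalization.Away.invSelf g with hv
  set φ : MvPolynomial (Fin n) A →ₐ[A] Localization.Away g := aeval v with hφ
  have hunit : algebraMap A (Localization.Away g) g * IsLocalization.Away.invSelf g = 1 :=
    IsLocalization.Away.mul_invSelf g
  have hJker : ∀ x ∈ J, φ x = 0 := by
    have hle : J ≤ RingHom.ker (φ : MvPolynomial (Fin n) A →+* Localization.Away g) := by
      rw [hJdef, Ideal.span_le]
      rintro y ⟨i, rfl⟩
      simp only [SetLike.mem_coe, RingHom.mem_ker]
      show φ (C g * X i - C (f i)) = 0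
      simp only [map_sub, map_mul, aeval_C, aeval_X, hv, hφ]
      rw [show algebraMap A (Localization.Away g) g *
          (algebraMap A (Localization.Away g) (f i) * IsLocalization.Away.invSelf g) =
          algebraMap A (Localization.Away g) (f i) *
            (algebraMap A (Localization.Away g) g * IsLocalization.Away.invSelf g) by ring,
        hunit, mul_one, sub_self]
    exact fun x hx => hle hx
  set φ' := Ideal.Quotient.liftₐ J φ hJker with hφ'
  have hφ'mk : ∀ p, φ' (Ideal.Quotient.mk J p) = φ p := fun p => by
    simp [hφ', Ideal.Quotient.liftₐ_apply]; exact Ideal.Quotient.lift_mk _ _ _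
  set gbar := (Ideal.Quotient.mk J) (C g) with hgbar
  have hφ'g : φ' gbar = algebraMap A (Localization.Away g) g := by
    rw [hgbar, hφ'mk]; simp [hφ]
  have hgunit : IsUnit (algebraMap A (Localization.Away g) g) :=
    isUnit_iff_exists_inv.mpr ⟨_, hunit⟩
  have hT : ∀ x ∈ gTorsion gbar, φ' x = 0 := by
    rintro x ⟨k, hk⟩
    have h2 : φ' gbar ^ k * φ' x = 0 := by
      rw [← map_pow, ← map_mul, hk, map_zero]
    rw [hφ'g] at h2
    exact ((hgunit.pow k).mul_right_eq_zero).mp h2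
  set ψ := Ideal.Quotient.liftₐ (gTorsion gbar) φ' hT with hψ
  have hψmk : ∀ p, ψ (Ideal.Quotient.mk (gTorsion gbar) (Ideal.Quotient.mk J p)) = φ p :=
    fun p => by simp [hψ, Ideal.Quotient.liftₐ_apply, hφ'mk]; exact (Ideal.Quotient.lift_mk _ _ _).trans (hφ'mk p)
  -- injectivity
  have hinj : Function.Injective ψ := by
    rw [injective_iff_map_eq_zero]
    intro x hx
    obtain ⟨y, rfl⟩ := Ideal.Quotient.mk_surjective x
    obtain ⟨p, rfl⟩ := Ideal.Quotient.mk_surjective y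
    rw [hψmk] at hx
    obtain ⟨d, a, hmem, heq⟩ := key_lemma n f g p
    rw [hx, zero_mul] at heq
    obtain ⟨⟨m, k, rfl⟩, hm⟩ := (IsLocalization.map_eq_zero_iff (Submonoid.powers g)
      (Localization.Away g) a).mp heq
    have hzero : C g ^ (d + k) * p ∈ J := by
      have : C g ^ (d + k) * p = C (g ^ k) * (C g ^ d * p - C a) + C (g ^ k * a) := by
        push_cast [map_mul, map_pow]
        ring
      rw [this, hm, map_zero, add_zero]
      exact Ideal.mul_mem_left _ _ hmem
    have htor : (Ideal.Quotient.mk J p) ∈ gTorsion gbar := by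
      refine ⟨d + k, ?_⟩
      rw [hgbar, ← map_pow, ← map_mul]
      exact Ideal.Quotient.eq_zero_iff_mem.mpr hzero
    exact Ideal.Quotient.eq_zero_iff_mem.mpr htor
  -- range
  have hrange : ψ.range = Algebra.adjoin A (Set.range v) := by
    rw [Algebra.adjoin_range_eq_range_aeval]
    ext x
    constructor
    · rintro ⟨y, rfl⟩
      obtain ⟨z, rfl⟩ := Ideal.Quotient.mk_surjective y
      obtain ⟨p, rfl⟩ := Ideal.Quotient.mk_surjective z
      exact ⟨p, (hψmk p).symm⟩
    · rintro ⟨p, rfl⟩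
      exact ⟨_, hψmk p⟩
  exact ⟨(AlgEquiv.ofInjective ψ hinj).trans (Subalgebra.equivOfEq _ _ hrange)⟩
end

section
/- Let A be a noetherian ring, I ⊆ A an ideal, and P ⊆ A another ideal. Then the P-adic completion of the polynomial quotient A[T_1,…,T_n]/(gT_1 − f_1, …, gT_n − f_n) is isomorphic to Â{T_1,…,T_n}/(gT_1 − f_1, …, gT_n − f_n), where Â is the P-adic completion of A and Â{T} denotes the restricted power series ring (P-adic completion of Â[T]). -/
open MvPolynomial

namespace Stmt8Aux

open AdicCompletion

variable {R S : Type} [CommRing R] [CommRing S]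

lemma pow_smul_top (I : Ideal R) (n : ℕ) : (I ^ n • ⊤ : Ideal R) = I ^ n := by
  ext x; simp

section Hom

variable (I : Ideal R) (K : Ideal S) (φ : R →+* S) (h : I.map φ ≤ K)
include h

lemma pow_le_comap (n : ℕ) :
    (I ^ n • ⊤ : Ideal R) ≤ ((K ^ n • ⊤ : Ideal S)).comap φ := by
  rw [pow_smul_top, pow_smul_top, ← Ideal.map_le_iff_le_comap, Ideal.map_pow]
  exact Ideal.pow_right_mono h n

/-- Component ring hom between levels of adic completions. -/
def cmp (n : ℕ) : (R ⧸ (I ^ n • ⊤ : Ideal R)) →+* (S ⧸ (K ^ n • ⊤ : Ideal S)) :=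
  Ideal.quotientMap _ φ (pow_le_comap I K φ h n)

lemma cmp_mk (n : ℕ) (r : R) :
    cmp I K φ h n (Ideal.Quotient.mk _ r) = Ideal.Quotient.mk _ (φ r) :=
  Ideal.quotientMap_mk

lemma cmp_transition {m n : ℕ} (hmn : m ≤ n) (x : R ⧸ (I ^ n • ⊤ : Ideal R)) :
    transitionMap K S hmn (cmp I K φ h n x) = cmp I K φ h m (transitionMap I R hmn x) := by
  obtain ⟨r, rfl⟩ := Ideal.Quotient.mk_surjective x
  rw [cmp_mk, transitionMap_ideal_mk, transitionMap_ideal_mk, cmp_mk]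

/-- A ring hom `R →+* S` mapping `I` into `K` induces a ring hom on adic completions. -/
def adicHom : AdicCompletion I R →+* AdicCompletion K S where
  toFun x := ⟨fun n => cmp I K φ h n (x.val n), fun {m n} hmn => by
    rw [cmp_transition, x.property hmn]⟩
  map_one' := AdicCompletion.ext fun n => by
    show cmp I K φ h n ((1 : AdicCompletion I R).val n) = (1 : AdicCompletion K S).val n
    rw [val_one, val_one, map_one]
  map_mul' x y := AdicCompletion.ext fun n => by
    show cmp I K φ h n ((x * y).val n)
      = cmp I K φ h n (x.val n) * cmp I K φ h n (y.val n)
    rw [val_mul, map_mul]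
  map_zero' := AdicCompletion.ext fun n => by
    show cmp I K φ h n ((0 : AdicCompletion I R).val n) = (0 : AdicCompletion K S).val n
    rw [val_zero_apply, val_zero_apply, _root_.map_zero]
  map_add' x y := AdicCompletion.ext fun n => by
    show cmp I K φ h n ((x + y).val n)
      = cmp I K φ h n (x.val n) + cmp I K φ h n (y.val n)
    rw [val_add_apply, map_add]

@[simp] lemma adicHom_val (x : AdicCompletion I R) (n : ℕ) :
    (adicHom I K φ h x).val n = cmp I K φ h n (x.val n) := rfl

omit [CommRing S] h in
lemma val_algebraMap (r : R) (n : ℕ) :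
    (algebraMap R (AdicCompletion I R) r).val n = Ideal.Quotient.mk _ r := rfl

lemma adicHom_algebraMap (r : R) :
    adicHom I K φ h (algebraMap R (AdicCompletion I R) r)
      = algebraMap S (AdicCompletion K S) (φ r) :=
  AdicCompletion.ext fun n => by
    rw [adicHom_val, val_algebraMap I r n, val_algebraMap K (φ r) n, cmp_mk]

lemma adicHom_bijective (hb : ∀ n, Function.Bijective (cmp I K φ h n)) :
    Function.Bijective (adicHom I K φ h) := by
  constructor
  · intro x y hxy
    refine AdicCompletion.ext fun n => (hb n).1 ?_
    exact congrArg (fun z : AdicCompletion K S => z.val n) hxy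
  · intro y
    choose c hc using fun n => (hb n).2 (y.val n)
    refine ⟨⟨c, fun {m n} hmn => (hb m).1 ?_⟩, AdicCompletion.ext fun n => ?_⟩
    · rw [← cmp_transition, hc, hc, y.property hmn]
    · exact hc n

end Hom


section Noeth

variable (I : Ideal R) [IsNoetherianRing R]

omit [CommRing S]

/-- The image of the completion of an ideal `J` inside the completion of `R` lands in
`J · (AdicCompletion I R)`. -/
lemma map_subtype_mem (J : Ideal R) (y : AdicCompletion I (↥J)) :
    AdicCompletion.map I (Submodule.subtype J) y
      ∈ J.map (algebraMap R (AdicCompletion I R)) := by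
  obtain ⟨m, a, ha⟩ :=
    Submodule.fg_iff_exists_fin_generating_family.mp (IsNoetherian.noetherian J)
  have hamem : ∀ i, a i ∈ J := fun i => by
    rw [← ha]; exact Submodule.subset_span ⟨i, rfl⟩
  -- the linear combination map
  let e : (Fin m → R) →ₗ[R] R :=
    { toFun := fun v => ∑ i, v i * a i
      map_add' := fun v w => by
        simp [add_mul, Finset.sum_add_distrib]
      map_smul' := fun r v => by
        simp [Finset.mul_sum, mul_assoc] }
  have hemem : ∀ v, e v ∈ J := fun v => by
    show ∑ i, v i * a i ∈ J
    exact Ideal.sum_mem _ fun i _ => Ideal.mul_mem_left _ _ (hamem i)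
  let π : (Fin m → R) →ₗ[R] ↥J := LinearMap.codRestrict J e hemem
  have hπ : Function.Surjective π := by
    intro j
    have hj : (j : R) ∈ Submodule.span R (Set.range a) := by rw [ha]; exact j.2
    obtain ⟨v, hv⟩ := (Finsupp.mem_span_range_iff_exists_finsupp).mp hj
    refine ⟨fun i => v i, Subtype.ext ?_⟩
    show ∑ i, v i * a i = (j : R)
    rw [← hv]
    rw [Finsupp.sum_fintype]
    · simp [mul_comm]
    · intro i; simp
  obtain ⟨w, hw⟩ := AdicCompletion.map_surjective I hπ y
  obtain ⟨d, rfl⟩ := AdicCompletion.mk_surjective I _ w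
  -- component cauchy sequences
  have hproj : ∀ (k : ℕ) (i : Fin m) (v : Fin m → R),
      v ∈ (I ^ k • ⊤ : Submodule R (Fin m → R)) → v i ∈ (I ^ k • ⊤ : Submodule R R) := by
    intro k i v hv
    have hs : Function.Surjective (LinearMap.proj i : (Fin m → R) →ₗ[R] R) :=
      fun r => ⟨fun _ => r, rfl⟩
    have := Submodule.mem_map_of_mem (f := (LinearMap.proj i : (Fin m → R) →ₗ[R] R)) hv
    rwa [Submodule.map_smul'', Submodule.map_top, LinearMap.range_eq_top.mpr hs] at this
  let c : Fin m → AdicCauchySequence I R := fun i =>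
    ⟨fun k => d.val k i, by
      intro k l hkl
      rw [SModEq.sub_mem]
      have := d.property hkl
      rw [SModEq.sub_mem] at this
      exact hproj k i _ this⟩
  rw [← hw]
  have : AdicCompletion.map I (Submodule.subtype J) (AdicCompletion.map I π (AdicCompletion.mk I _ d))
      = ∑ i, algebraMap R (AdicCompletion I R) (a i) * AdicCompletion.mk I R (c i) := by
    rw [AdicCompletion.map_mk, AdicCompletion.map_mk]
    apply AdicCompletion.ext
    intro k
    rw [AdicCompletion.mk_apply_coe, AdicCompletion.val_sum_apply]
    rw [AdicCauchySequence.map_apply_coe]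
    simp only [AdicCauchySequence.map_apply_coe]
    show Submodule.mkQ _ (e (d.val k)) = _
    have : ∀ i : Fin m,
        (algebraMap R (AdicCompletion I R) (a i) * AdicCompletion.mk I R (c i)).val k
          = Ideal.Quotient.mk (I ^ k • ⊤ : Ideal R) (a i * d.val k i) := by
      intro i
      rw [val_mul, val_algebraMap I (a i) k, AdicCompletion.mk_apply_coe]
      show _ = Ideal.Quotient.mk _ (a i) * Ideal.Quotient.mk _ (d.val k i)
      rw [← map_mul]
      rfl
    rw [Finset.sum_congr rfl fun i _ => this i, ← map_sum]
    show Ideal.Quotient.mk (I ^ k • ⊤ : Ideal R) (∑ i, d.val k i * a i) = _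
    rw [Finset.sum_congr rfl fun (i : Fin m) _ => mul_comm (d.val k i) (a i)]
  rw [this]
  exact Ideal.sum_mem _ fun i _ =>
    Ideal.mul_mem_right _ _ (Ideal.mem_map_of_mem _ (hamem i))

/-- If the completion of the quotient map kills `x`, then `x ∈ J · (AdicCompletion I R)`. -/
lemma mem_map_of_map_mkQ_eq_zero (J : Ideal R) (x : AdicCompletion I R)
    (hx : AdicCompletion.map I (Submodule.mkQ J) x = 0) :
    x ∈ J.map (algebraMap R (AdicCompletion I R)) := by
  have hex := AdicCompletion.map_exact (I := I) (Submodule.injective_subtype J)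
    (LinearMap.exact_subtype_mkQ J) (Submodule.mkQ_surjective J)
  obtain ⟨y, hy⟩ := (hex x).mp hx
  rw [← hy]
  exact map_subtype_mem I J y

/-- Krull-type: if the `n`-th component of `x` vanishes, then
`x ∈ I^n · (AdicCompletion I R)`. -/
lemma mem_pow_map_of_val_eq_zero (n : ℕ) (x : AdicCompletion I R)
    (hx : x.val n = 0) :
    x ∈ (I ^ n).map (algebraMap R (AdicCompletion I R)) := by
  obtain ⟨a, rfl⟩ := AdicCompletion.mk_surjective I R x
  rw [AdicCompletion.mk_apply_coe] at hx
  have han : a.val n ∈ (I ^ n : Ideal R) := by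
    have := (Submodule.Quotient.mk_eq_zero _).mp hx
    rwa [pow_smul_top] at this
  apply mem_map_of_map_mkQ_eq_zero I (I ^ n)
  rw [AdicCompletion.map_mk]
  apply AdicCompletion.ext
  intro k
  rw [AdicCompletion.mk_apply_coe, AdicCompletion.val_zero_apply,
    AdicCauchySequence.map_apply_coe]
  rw [Submodule.mkQ_apply, Submodule.Quotient.mk_eq_zero]
  -- show (mkQ (I^n)) (a k) ∈ I ^ k • ⊤
  set l := max k n with hl
  have h1 : a.val k - a.val l ∈ (I ^ k • ⊤ : Submodule R R) := by
    have := a.property (le_max_left k n)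
    rwa [SModEq.sub_mem] at this
  have h2 : a.val l ∈ (I ^ n : Ideal R) := by
    have := a.property (le_max_right k n)
    rw [SModEq.sub_mem] at this
    rw [pow_smul_top] at this
    have := (I ^ n).sub_mem han this
    simpa using this
  have hdecomp : a.val k = (a.val k - a.val l) + a.val l := by ring
  rw [hdecomp, map_add]
  apply Submodule.add_mem
  · have := Submodule.mem_map_of_mem (f := Submodule.mkQ (I ^ n : Ideal R)) h1
    rwa [Submodule.map_smul'', Submodule.map_top, Submodule.range_mkQ] at this
  · have : Submodule.mkQ (I ^ n : Ideal R) (a.val l) = 0 := by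
      rw [Submodule.mkQ_apply, Submodule.Quotient.mk_eq_zero]
      exact h2
    rw [this]
    exact Submodule.zero_mem _

/-- Surjectivity modulo `(I·Â)^n` of `A → Â`. -/
lemma exists_algebraMap_sub_mem (n : ℕ) (b : AdicCompletion I R) :
    ∃ a : R, algebraMap R (AdicCompletion I R) a - b
      ∈ (I.map (algebraMap R (AdicCompletion I R))) ^ n := by
  rw [← Ideal.map_pow]
  obtain ⟨c, rfl⟩ := AdicCompletion.mk_surjective I R b
  refine ⟨c.val n, mem_pow_map_of_val_eq_zero I n _ ?_⟩
  rw [AdicCompletion.val_sub_apply, val_algebraMap I (c.val n) n, AdicCompletion.mk_apply_coe]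
  rw [sub_eq_zero]
  rfl

omit [IsNoetherianRing R] in
/-- Injectivity modulo powers: `A/I^n → Â/(I·Â)^n` is injective. -/
lemma mem_of_algebraMap_mem (n : ℕ) (a : R)
    (ha : algebraMap R (AdicCompletion I R) a
      ∈ (I.map (algebraMap R (AdicCompletion I R))) ^ n) :
    a ∈ I ^ n := by
  rw [← Ideal.map_pow] at ha
  have hle : (I ^ n).map (algebraMap R (AdicCompletion I R))
      ≤ RingHom.ker (evalₐ I n).toRingHom := by
    rw [Ideal.map_le_iff_le_comap]
    intro z hz
    rw [Ideal.mem_comap, RingHom.mem_ker]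
    show evalₐ I n (algebraMap R (AdicCompletion I R) z) = 0
    rw [AlgHom.commutes]
    rw [Ideal.Quotient.algebraMap_eq, Ideal.Quotient.eq_zero_iff_mem]
    exact hz
  have := hle ha
  rw [RingHom.mem_ker] at this
  have h2 : evalₐ I n (algebraMap R (AdicCompletion I R) a) = 0 := this
  rw [AlgHom.commutes, Ideal.Quotient.algebraMap_eq, Ideal.Quotient.eq_zero_iff_mem] at h2
  exact h2

end Noeth


section QuotEquiv

variable (I J : Ideal R) [IsNoetherianRing R]

omit [CommRing S]

local notation "mkJ" => Ideal.Quotient.mk J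

lemma quot_smul_top_eq (k : ℕ) :
    (I ^ k • ⊤ : Submodule R (R ⧸ J))
      = Submodule.restrictScalars R (((I.map (Ideal.Quotient.mk J)) ^ k • ⊤ : Ideal (R ⧸ J))) := by
  rw [pow_smul_top, ← Ideal.map_pow, ← Ideal.Quotient.algebraMap_eq, ← Ideal.smul_top_eq_map]

/-- The canonical hom from the completion of `R` to the completion of `R ⧸ J`. -/
noncomputable def quotHom : AdicCompletion I R →+* AdicCompletion (I.map (Ideal.Quotient.mk J)) (R ⧸ J) :=
  adicHom I (I.map (Ideal.Quotient.mk J)) (Ideal.Quotient.mk J) le_rfl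

lemma quotHom_surjective : Function.Surjective (quotHom I J) := by
  intro y
  obtain ⟨c, rfl⟩ := AdicCompletion.mk_surjective (I.map (Ideal.Quotient.mk J)) (R ⧸ J) y
  -- view `c` as an `I`-adic cauchy sequence over `R`
  let c' : AdicCauchySequence I (R ⧸ J) := ⟨c.val, by
    intro k l hkl
    rw [SModEq.sub_mem, quot_smul_top_eq I J k, Submodule.restrictScalars_mem]
    have := c.property hkl
    rwa [SModEq.sub_mem] at this⟩
  obtain ⟨x, hx⟩ := AdicCompletion.map_surjective I (Submodule.mkQ_surjective (J : Submodule R R))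
    (AdicCompletion.mk I (R ⧸ J) c')
  obtain ⟨a, rfl⟩ := AdicCompletion.mk_surjective I R x
  refine ⟨AdicCompletion.mk I R a, AdicCompletion.ext fun k => ?_⟩
  have hxk := congrArg (fun z : AdicCompletion I (R ⧸ J) => z.val k) hx
  simp only [AdicCompletion.map_mk, AdicCompletion.mk_apply_coe,
    AdicCauchySequence.map_apply_coe] at hxk
  -- hxk : mk (mkQ J (a k)) = mk (c' k) in (R⧸J)⧸(I^k•⊤)
  have hsub : Submodule.mkQ (J : Submodule R R) (a.val k) - c.val k
      ∈ (I ^ k • ⊤ : Submodule R (R ⧸ J)) := by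
    rw [← Submodule.Quotient.eq]
    exact hxk
  rw [quot_smul_top_eq I J k, Submodule.restrictScalars_mem] at hsub
  show cmp I _ (Ideal.Quotient.mk J) le_rfl k ((AdicCompletion.mk I R a).val k)
    = (AdicCompletion.mk _ (R ⧸ J) c).val k
  rw [AdicCompletion.mk_apply_coe, AdicCompletion.mk_apply_coe, Submodule.mkQ_apply,
    Submodule.mkQ_apply]
  show cmp I _ (Ideal.Quotient.mk J) le_rfl k (Ideal.Quotient.mk _ (a.val k)) = _
  rw [cmp_mk]
  have : (Ideal.Quotient.mk ((I.map (Ideal.Quotient.mk J)) ^ k • ⊤ : Ideal (R ⧸ J)))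
      (Ideal.Quotient.mk J (a.val k)) = Ideal.Quotient.mk _ (c.val k) := by
    rw [Ideal.Quotient.mk_eq_mk_iff_sub_mem]
    exact hsub
  exact this

lemma quotHom_ker : RingHom.ker (quotHom I J) = J.map (algebraMap R (AdicCompletion I R)) := by
  apply le_antisymm
  · intro x hx
    rw [RingHom.mem_ker] at hx
    obtain ⟨a, rfl⟩ := AdicCompletion.mk_surjective I R x
    apply mem_map_of_map_mkQ_eq_zero I J
    rw [AdicCompletion.map_mk]
    apply AdicCompletion.ext
    intro k
    rw [AdicCompletion.mk_apply_coe, AdicCompletion.val_zero_apply, AdicCauchySequence.map_apply_coe,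
      Submodule.mkQ_apply, Submodule.Quotient.mk_eq_zero]
    rw [quot_smul_top_eq I J k, Submodule.restrictScalars_mem]
    have hk := congrArg (fun z : AdicCompletion (I.map (Ideal.Quotient.mk J)) (R ⧸ J) => z.val k) hx
    show (Submodule.mkQ (J : Submodule R R)) (a.val k) ∈ _
    rw [Submodule.mkQ_apply]
    have : cmp I _ (Ideal.Quotient.mk J) le_rfl k ((AdicCompletion.mk I R a).val k) = 0 := hk
    rw [AdicCompletion.mk_apply_coe, Submodule.mkQ_apply] at this
    have h2 : cmp I _ (Ideal.Quotient.mk J) le_rfl k (Ideal.Quotient.mk _ (a.val k)) = 0 := this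
    rw [cmp_mk, Ideal.Quotient.eq_zero_iff_mem] at h2
    exact h2
  · rw [Ideal.map_le_iff_le_comap]
    intro j hj
    rw [Ideal.mem_comap, RingHom.mem_ker]
    show quotHom I J (algebraMap R (AdicCompletion I R) j) = 0
    rw [quotHom, adicHom_algebraMap]
    rw [Ideal.Quotient.eq_zero_iff_mem.mpr hj]
    exact map_zero _

/-- Adic completion commutes with quotients, for noetherian rings. -/
noncomputable def quotCompletionEquiv :
    AdicCompletion (I.map (Ideal.Quotient.mk J)) (R ⧸ J)
      ≃+* (AdicCompletion I R) ⧸ (J.map (algebraMap R (AdicCompletion I R))) :=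
  ((Ideal.quotEquivOfEq (quotHom_ker I J).symm).trans
    (RingHom.quotientKerEquivOfSurjective (quotHom_surjective I J))).symm

end QuotEquiv


section Poly

variable {A : Type} [CommRing A] [IsNoetherianRing A] (P : Ideal A) (σ : Type) [Fintype σ]

local notation "B" => AdicCompletion P A
local notation "alg" => algebraMap A (AdicCompletion P A)

/-- Base change of polynomials along `A → Â`. -/
noncomputable def polyHom : MvPolynomial σ A →+* MvPolynomial σ B :=
  MvPolynomial.map (algebraMap A (AdicCompletion P A))

lemma polyIdeal_eq :
    (P.map (C : A →+* MvPolynomial σ A)).map (polyHom P σ)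
      = (P.map alg).map (C : B →+* MvPolynomial σ B) := by
  have h : (polyHom P σ).comp (C : A →+* MvPolynomial σ A)
      = (C : B →+* MvPolynomial σ B).comp (algebraMap A (AdicCompletion P A)) :=
    RingHom.ext fun a => MvPolynomial.map_C _ a
  rw [Ideal.map_map, Ideal.map_map, h]

lemma polyHom_le :
    (P.map (C : A →+* MvPolynomial σ A)).map (polyHom P σ)
      ≤ (P.map alg).map (C : B →+* MvPolynomial σ B) :=
  le_of_eq (polyIdeal_eq P σ)

lemma poly_pow_eq (k : ℕ) :
    (((P.map alg).map (C : B →+* MvPolynomial σ B)) ^ k • ⊤ : Ideal (MvPolynomial σ B))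
      = ((P ^ k).map alg).map (C : B →+* MvPolynomial σ B) := by
  rw [pow_smul_top, ← Ideal.map_pow, ← Ideal.map_pow]

lemma poly_pow_eq' (k : ℕ) :
    ((P.map (C : A →+* MvPolynomial σ A)) ^ k • ⊤ : Ideal (MvPolynomial σ A))
      = (P ^ k).map (C : A →+* MvPolynomial σ A) := by
  rw [pow_smul_top, ← Ideal.map_pow]

lemma poly_cmp_bijective (k : ℕ) :
    Function.Bijective
      (cmp (P.map (C : A →+* MvPolynomial σ A)) ((P.map alg).map (C : B →+* MvPolynomial σ B))
        (polyHom P σ) (polyHom_le P σ) k) := by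
  classical
  constructor
  · -- injectivity
    have hcomap : Ideal.comap (polyHom P σ)
        ((((P.map alg).map (C : B →+* MvPolynomial σ B)) ^ k • ⊤ : Ideal (MvPolynomial σ B)))
        ≤ ((P.map (C : A →+* MvPolynomial σ A)) ^ k • ⊤ : Ideal (MvPolynomial σ A)) := by
      intro p hp
      rw [Ideal.mem_comap, poly_pow_eq, MvPolynomial.mem_map_C_iff] at hp
      rw [poly_pow_eq', MvPolynomial.mem_map_C_iff]
      intro m
      have := hp m
      rw [polyHom, MvPolynomial.coeff_map] at this
      apply mem_of_algebraMap_mem P k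
      rwa [Ideal.map_pow] at this
    exact Ideal.quotientMap_injective' hcomap
  · -- surjectivity
    intro x
    obtain ⟨b, rfl⟩ := Ideal.Quotient.mk_surjective x
    choose w hw using fun z : B => exists_algebraMap_sub_mem P k z
    refine ⟨Ideal.Quotient.mk _
      (∑ m ∈ b.support, MvPolynomial.monomial m (w (MvPolynomial.coeff m b))), ?_⟩
    rw [cmp_mk, Ideal.Quotient.mk_eq_mk_iff_sub_mem, poly_pow_eq,
      MvPolynomial.mem_map_C_iff]
    intro m
    rw [MvPolynomial.coeff_sub, polyHom, MvPolynomial.coeff_map]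
    have hcoeff : MvPolynomial.coeff m
        (∑ m' ∈ b.support, MvPolynomial.monomial m' (w (MvPolynomial.coeff m' b)))
        = if m ∈ b.support then w (MvPolynomial.coeff m b) else 0 := by
      rw [MvPolynomial.coeff_sum]
      simp_rw [MvPolynomial.coeff_monomial]
      exact Finset.sum_ite_eq' b.support m (fun m' => w (MvPolynomial.coeff m' b))
    rw [hcoeff]
    by_cases hm : m ∈ b.support
    · rw [if_pos hm, Ideal.map_pow]
      exact hw (MvPolynomial.coeff m b)
    · rw [if_neg hm]
      rw [MvPolynomial.notMem_support_iff.mp hm]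
      simp

/-- The completion of `A[T]` at `P` agrees with the completion of `Â[T]` at `P·Â`. -/
noncomputable def polyCompletionEquiv :
    AdicCompletion (P.map (C : A →+* MvPolynomial σ A)) (MvPolynomial σ A)
      ≃+* AdicCompletion ((P.map alg).map (C : B →+* MvPolynomial σ B)) (MvPolynomial σ B) :=
  RingEquiv.ofBijective
    (adicHom _ _ (polyHom P σ) (polyHom_le P σ))
    (adicHom_bijective _ _ _ _ (poly_cmp_bijective P σ))

lemma polyCompletionEquiv_algebraMap (p : MvPolynomial σ A) :
    polyCompletionEquiv P σ (algebraMap _ _ p) = algebraMap _ _ (polyHom P σ p) :=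
  adicHom_algebraMap _ _ _ _ p

end Poly

end Stmt8Aux

open Stmt8Aux

set_option maxHeartbeats 3000000 in
open MvPolynomial in
/-- the `P`-adic completion of `A[T₁,…,Tₙ]/(gT₁ − f₁, …, gTₙ − fₙ)` is
isomorphic to `Â{T₁,…,Tₙ}/(gT₁ − f₁, …, gTₙ − fₙ)`, where `Â` is the `P`-adic completion
of `A` and `Â{T}` is the `P`-adic completion of `Â[T]` (restricted power series). -/
theorem stmt8 {A : Type} [CommRing A] [IsNoetherianRing A] (P : Ideal A)
    (n : ℕ) (f : Fin n → A) (g : A) :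
    Nonempty
      (AdicCompletion
          (P.map (algebraMap A
            (MvPolynomial (Fin n) A ⧸
              Ideal.span (Set.range fun i => C g * X i - C (f i)))))
          (MvPolynomial (Fin n) A ⧸
            Ideal.span (Set.range fun i => C g * X i - C (f i)))
        ≃+*
        (AdicCompletion
            ((P.map (algebraMap A (AdicCompletion P A))).map
              (C : AdicCompletion P A →+* MvPolynomial (Fin n) (AdicCompletion P A)))
            (MvPolynomial (Fin n) (AdicCompletion P A)) ⧸
          Ideal.span (Set.range fun i =>
            algebraMap (MvPolynomial (Fin n) (AdicCompletion P A))
              (AdicCompletion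
                ((P.map (algebraMap A (AdicCompletion P A))).map
                  (C : AdicCompletion P A →+* MvPolynomial (Fin n) (AdicCompletion P A)))
                (MvPolynomial (Fin n) (AdicCompletion P A)))
              (C (algebraMap A (AdicCompletion P A) g) * X i -
                C (algebraMap A (AdicCompletion P A) (f i)))))) := by
  classical
  -- rewrite the LHS completion ideal
  have hQ : P.map (algebraMap A
      (MvPolynomial (Fin n) A ⧸ Ideal.span (Set.range fun i => C g * X i - C (f i))))
      = (P.map (C : A →+* MvPolynomial (Fin n) A)).map
          (Ideal.Quotient.mk (Ideal.span (Set.range fun i => C g * X i - C (f i)))) := by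
    rw [Ideal.map_map]
    rfl
  rw [hQ]
  -- rewrite the RHS quotient ideal
  have hR : Ideal.span (Set.range fun i =>
      algebraMap (MvPolynomial (Fin n) (AdicCompletion P A))
        (AdicCompletion
          ((P.map (algebraMap A (AdicCompletion P A))).map
            (C : AdicCompletion P A →+* MvPolynomial (Fin n) (AdicCompletion P A)))
          (MvPolynomial (Fin n) (AdicCompletion P A)))
        (C (algebraMap A (AdicCompletion P A) g) * X i -
          C (algebraMap A (AdicCompletion P A) (f i))))
      = (Ideal.span (Set.range fun i =>
          C (algebraMap A (AdicCompletion P A) g) * X i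
            - C (algebraMap A (AdicCompletion P A) (f i)))).map
          (algebraMap (MvPolynomial (Fin n) (AdicCompletion P A))
            (AdicCompletion
              ((P.map (algebraMap A (AdicCompletion P A))).map
                (C : AdicCompletion P A →+* MvPolynomial (Fin n) (AdicCompletion P A)))
              (MvPolynomial (Fin n) (AdicCompletion P A)))) := by
    rw [Ideal.map_span, ← Set.range_comp]
    rfl
  rw [hR]
  -- the base change equivalence
  set Ψ := polyCompletionEquiv P (Fin n) with hΨdef
  have hcomp : Ψ.toRingHom.comp
        (algebraMap (MvPolynomial (Fin n) A)
          (AdicCompletion (P.map (C : A →+* MvPolynomial (Fin n) A))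
            (MvPolynomial (Fin n) A)))
      = (algebraMap (MvPolynomial (Fin n) (AdicCompletion P A))
          (AdicCompletion
            ((P.map (algebraMap A (AdicCompletion P A))).map
              (C : AdicCompletion P A →+* MvPolynomial (Fin n) (AdicCompletion P A)))
            (MvPolynomial (Fin n) (AdicCompletion P A)))).comp
          (polyHom P (Fin n)) :=
    RingHom.ext fun p => polyCompletionEquiv_algebraMap P (Fin n) p
  have hJφ : (Ideal.span (Set.range fun i => C g * X i - C (f i))).map (polyHom P (Fin n))
      = Ideal.span (Set.range fun i =>
          C (algebraMap A (AdicCompletion P A) g) * X i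
            - C (algebraMap A (AdicCompletion P A) (f i))) := by
    rw [Ideal.map_span, ← Set.range_comp]
    refine congrArg Ideal.span (congrArg Set.range (funext fun i => ?_))
    show polyHom P (Fin n) (C g * X i - C (f i)) = _
    simp [polyHom]
  have hIJ : (Ideal.span (Set.range fun i =>
        C (algebraMap A (AdicCompletion P A) g) * X i
          - C (algebraMap A (AdicCompletion P A) (f i)))).map
        (algebraMap (MvPolynomial (Fin n) (AdicCompletion P A))
          (AdicCompletion
            ((P.map (algebraMap A (AdicCompletion P A))).map
              (C : AdicCompletion P A →+* MvPolynomial (Fin n) (AdicCompletion P A)))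
            (MvPolynomial (Fin n) (AdicCompletion P A))))
      = ((Ideal.span (Set.range fun i => C g * X i - C (f i))).map
          (algebraMap (MvPolynomial (Fin n) A)
            (AdicCompletion (P.map (C : A →+* MvPolynomial (Fin n) A))
              (MvPolynomial (Fin n) A)))).map Ψ.toRingHom := by
    refine Eq.symm ?_
    refine (Ideal.map_map _ _).trans ?_
    rw [hcomp]
    refine ((Ideal.map_map (polyHom P (Fin n)) _).symm).trans ?_
    rw [hJφ]
  exact ⟨(quotCompletionEquiv (P.map (C : A →+* MvPolynomial (Fin n) A))
      (Ideal.span (Set.range fun i => C g * X i - C (f i)))).trans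
    (Ideal.quotientEquiv _ _ Ψ hIJ)⟩
end
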